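/- Let Q ⊆ ℕ^d be an interval with n minimal elements and let P ⊆ Q be an initial scaffold of Q. Then the number of non-identity relations of P is at most d times the number of elements of P; i.e., |hom P| ≤ (d+1)·|Ob P|, counting identities. -/

import Mathlib

/-- A single comparability step within `S` with respect to the relation `r`. -/
def StepIn {α : Type*} (S : Set α) (r : α → α → Prop) (x y : α) : Prop :=
  x ∈ S ∧ y ∈ S ∧ (r x y ∨ r y x)

/-- Connectivity of the set `S` equipped with the relation `r`: `S` is nonempty and any
two elements of `S` are joined by a finite zigzag of `r`-steps within `S`. -/
def ConnIn {α : Type*} (S : Set α) (r : α → α → Prop) : Prop :=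
  S.Nonempty ∧ ∀ a ∈ S, ∀ b ∈ S, Relation.ReflTransGen (StepIn S r) a b

/-- Connectivity of a subset of a poset, as a subposet (zigzags of comparabilities). -/
def PosetConn {α : Type*} [LE α] (S : Set α) : Prop := ConnIn S (· ≤ ·)

/-- `a` and `b` lie in `S` in the same connected component of the subposet `S`. -/
def SameComp {α : Type*} [LE α] (S : Set α) (a b : α) : Prop :=
  a ∈ S ∧ b ∈ S ∧ Relation.ReflTransGen (StepIn S (· ≤ ·)) a b

/-- `m` is a minimum of the subposet `Q`. -/
def IsMinIn {α : Type*} [PartialOrder α] (Q : Set α) (m : α) : Prop :=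
  m ∈ Q ∧ ∀ x ∈ Q, ¬ x < m

/-- The strict downset of `q` taken in the subposet `Q`. -/
def strictDown {α : Type*} [PartialOrder α] (Q : Set α) (q : α) : Set α :=
  {p | p ∈ Q ∧ p < q}

/-- An initial scaffold of the subposet `Q`: a subposet `(P, r)` whose elements are
exactly the elements of `Q` with disconnected strict downset in `Q`, and whose
non-identity relations `r` consist, for each such `b` and each connected component of
the strict downset of `b` in `Q`, of exactly one relation `m < b` with `m` a minimum
of `Q` in that component. -/
def IsScaffoldIn {α : Type*} [PartialOrder α] (Q P : Set α) (r : α → α → Prop) : Prop :=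
  P = {q | q ∈ Q ∧ ¬ PosetConn (strictDown Q q)} ∧
  (∀ a b, r a b → IsMinIn Q a ∧ a < b ∧ b ∈ P) ∧
  (∀ b ∈ P, ∀ x ∈ strictDown Q b, ∃! m, r m b ∧ SameComp (strictDown Q b) m x)

/-- A subset of a poset is an interval if it is connected and convex. -/
def IsIntervalSet {α : Type*} [PartialOrder α] (Q : Set α) : Prop :=
  PosetConn Q ∧ ∀ p r, p ∈ Q → r ∈ Q → ∀ x, p ≤ x → x ≤ r → x ∈ Q

section Aux

variable {d : ℕ}

lemma exists_lt_coord {m b : Fin d → ℕ} (h : m < b) : ∃ i, m i < b i :=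
  (Pi.lt_def.mp h).2

lemma auxProd_ncard (P : Set (Fin d → ℕ)) (_hPfin : P.Finite) :
    ((Set.univ : Set (Fin d)) ×ˢ P).ncard = d * P.ncard := by
  rw [← Nat.card_coe_set_eq, Nat.card_congr (Equiv.Set.prod _ _), Nat.card_prod,
    Nat.card_congr (Equiv.Set.univ (Fin d)), Nat.card_eq_fintype_card, Fintype.card_fin,
    Nat.card_coe_set_eq]

end Aux

/-- For an interval `Q ⊆ ℕ^d` and an initial scaffold `(P, r)` of `Q`, the number of
non-identity relations of `P` is at most `d` times the number of elements of `P`. -/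
theorem stmt12 {d : ℕ} (Q : Set (Fin d → ℕ)) (hQ : IsIntervalSet Q)
    (P : Set (Fin d → ℕ)) (r : (Fin d → ℕ) → (Fin d → ℕ) → Prop)
    (hP : IsScaffoldIn Q P r) :
    {p : (Fin d → ℕ) × (Fin d → ℕ) | r p.1 p.2}.ncard ≤ d * P.ncard := by
  classical
  obtain ⟨hPdef, hr, huniq⟩ := hP
  set R : Set ((Fin d → ℕ) × (Fin d → ℕ)) := {p | r p.1 p.2} with hR
  by_cases hRfin : R.Finite
  swap
  · rw [Set.Infinite.ncard hRfin]; exact Nat.zero_le _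
  -- d = 0 case : R is empty
  rcases Nat.eq_zero_or_pos d with hd | hd
  · have hRempty : R = ∅ := by
      ext p
      simp only [Set.mem_setOf_eq, Set.mem_empty_iff_false, iff_false, hR]
      intro hrp
      have hlt := (hr _ _ hrp).2.1
      obtain ⟨i, _⟩ := exists_lt_coord hlt
      exact absurd i.2 (by omega)
    rw [hRempty, Set.ncard_empty]; exact Nat.zero_le _
  haveI : Nonempty (Fin d) := ⟨⟨0, hd⟩⟩
  -- membership facts
  have hbQ : ∀ b ∈ P, b ∈ Q := by
    intro b hb; rw [hPdef] at hb; exact hb.1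
  -- P is finite
  have hPfin : P.Finite := by
    have hMfin : {q | q ∈ Q ∧ strictDown Q q = ∅}.Finite := by
      have hanti : IsAntichain (· ≤ ·) {q | q ∈ Q ∧ strictDown Q q = ∅} := by
        intro a ha b hb hne hle
        have : a ∈ strictDown Q b := ⟨ha.1, lt_of_le_of_ne hle hne⟩
        rw [hb.2] at this
        exact this
      have hpwo : {q | q ∈ Q ∧ strictDown Q q = ∅}.IsPWO :=
        (Set.IsPWO.pi (fun (_ : Fin d) => Set.isPWO_of_wellQuasiOrderedLE (Set.univ : Set ℕ))).mono
          (fun x _ => by simp)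
      exact hanti.finite_of_partiallyWellOrderedOn hpwo
    have hBsub : {b | b ∈ P ∧ (strictDown Q b).Nonempty} ⊆ Prod.snd '' R := by
      rintro b ⟨hbP, x, hx⟩
      obtain ⟨m, ⟨hm, _⟩, _⟩ := huniq b hbP x hx
      exact ⟨(m, b), hm, rfl⟩
    have hPsub : P ⊆ {q | q ∈ Q ∧ strictDown Q q = ∅} ∪
        {b | b ∈ P ∧ (strictDown Q b).Nonempty} := by
      intro q hq
      rcases Set.eq_empty_or_nonempty (strictDown Q q) with h | h
      · exact Or.inl ⟨hbQ q hq, h⟩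
      · exact Or.inr ⟨hq, h⟩
    exact (hMfin.union ((hRfin.image _).subset hBsub)).subset hPsub
  -- the injection
  set ι : (Fin d → ℕ) × (Fin d → ℕ) → Fin d × (Fin d → ℕ) := fun p =>
    if h : ∃ i, p.1 i < p.2 i then (h.choose, p.2) else (Classical.arbitrary _, p.2)
    with hι
  have hι2 : ∀ p, (ι p).2 = p.2 := by
    intro p
    rw [hι]
    dsimp only
    split <;> rfl
  have himg : ι '' R ⊆ (Set.univ : Set (Fin d)) ×ˢ P := by
    rintro _ ⟨p, hp, rfl⟩
    exact ⟨Set.mem_univ _, (hι2 p) ▸ (hr _ _ hp).2.2⟩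
  have hinj : Set.InjOn ι R := by
    rintro ⟨m, b⟩ hp ⟨m', b'⟩ hp' heq
    simp only [hR, Set.mem_setOf_eq] at hp hp'
    have hex : ∃ i, m i < b i := exists_lt_coord (hr _ _ hp).2.1
    have hex' : ∃ i, m' i < b' i := exists_lt_coord (hr _ _ hp').2.1
    rw [hι] at heq
    simp only [dif_pos hex, dif_pos hex', Prod.mk.injEq] at heq
    obtain ⟨h1, h2⟩ := heq
    subst h2
    obtain ⟨i, hmi, hm'i⟩ : ∃ i, m i < b i ∧ m' i < b i :=
      ⟨hex.choose, hex.choose_spec, by rw [h1]; exact hex'.choose_spec⟩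
    have hbP : b ∈ P := (hr _ _ hp).2.2
    have hbQmem : b ∈ Q := hbQ b hbP
    -- the element x = b - e_i
    set x : Fin d → ℕ := Function.update b i (b i - 1) with hx
    have hxb : x < b := by
      constructor
      · intro j
        by_cases hj : j = i
        · rw [hj, hx, Function.update_self]; exact Nat.sub_le _ _
        · rw [hx, Function.update_of_ne hj]
      · intro hba
        have h1 : (b i : ℕ) ≤ b i - 1 := by
          have := hba i
          rw [hx, Function.update_self] at this
          exact this
        have h2 : (m i : ℕ) < b i := hmi
        omega
    have key : ∀ m₀ : Fin d → ℕ, r m₀ b → m₀ i < b i →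
        r m₀ b ∧ SameComp (strictDown Q b) m₀ x := by
      intro m₀ hrm₀ hm₀i
      have hm₀Q : m₀ ∈ Q := (hr _ _ hrm₀).1.1
      have hm₀b : m₀ < b := (hr _ _ hrm₀).2.1
      have hm₀x : m₀ ≤ x := by
        intro j
        by_cases hj : j = i
        · rw [hj, hx, Function.update_self]
          have h2 : (m₀ i : ℕ) < b i := hm₀i
          show (m₀ i : ℕ) ≤ b i - 1
          omega
        · rw [hx, Function.update_of_ne hj]; exact hm₀b.le j
      have hxQ : x ∈ Q := hQ.2 m₀ b hm₀Q hbQmem x hm₀x hxb.le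
      have hxS : x ∈ strictDown Q b := ⟨hxQ, hxb⟩
      have hm₀S : m₀ ∈ strictDown Q b := ⟨hm₀Q, hm₀b⟩
      exact ⟨hrm₀, hm₀S, hxS,
        Relation.ReflTransGen.single ⟨hm₀S, hxS, Or.inl hm₀x⟩⟩
    have hxS : x ∈ strictDown Q b := by
      obtain ⟨_, _, hxS, _⟩ := key m hp hmi
      exact hxS
    obtain ⟨m₁, _, huniq₁⟩ := huniq b hbP x hxS
    have e1 : m = m₁ := huniq₁ m (key m hp hmi)
    have e2 : m' = m₁ := huniq₁ m' (key m' hp' hm'i)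
    rw [Prod.mk.injEq]
    exact ⟨e1.trans e2.symm, rfl⟩
  calc R.ncard = (ι '' R).ncard := (Set.ncard_image_of_injOn hinj).symm
    _ ≤ ((Set.univ : Set (Fin d)) ×ˢ P).ncard :=
        Set.ncard_le_ncard himg (Set.finite_univ.prod hPfin)
    _ = d * P.ncard := auxProd_ncard P hPfin
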